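/- For x, y ∈ {0,1}^N, the average over uniformly random permutations σ of [N] satisfies (1/N!) ∑_{σ ∈ S_N} ∑_{A⊆[N],|A|=n} ∏_{j∈A} (1 - x[j]/p)(1 - y[σ(j)]/p) = C(N,n) Q_n(‖x‖;N,p) Q_n(‖y‖;N,p). -/

import Mathlib

open Finset


lemma coeff_ext_aux (M : ℕ) (c d : ℕ → ℝ)
    (h : ∀ s : ℝ, ∑ m ∈ Finset.range M, c m * s ^ m = ∑ m ∈ Finset.range M, d m * s ^ m)
    {k : ℕ} (hk : k < M) : c k = d k := by
  have hpoly : (∑ m ∈ Finset.range M, Polynomial.C (c m) * Polynomial.X ^ m : Polynomial ℝ)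
      = ∑ m ∈ Finset.range M, Polynomial.C (d m) * Polynomial.X ^ m := by
    apply Polynomial.funext
    intro s
    simpa [Polynomial.eval_finset_sum] using h s
  have h2 := congrArg (fun P : Polynomial ℝ => P.coeff k) hpoly
  simpa [Polynomial.finset_sum_coeff, Polynomial.coeff_C_mul, Polynomial.coeff_X_pow,
    Finset.sum_ite_eq', hk, Finset.mem_range] using h2

lemma esymm_gen (N : ℕ) (a : Fin N → ℝ) (s : ℝ) :
    ∏ j, (1 + a j * s)
      = ∑ m ∈ Finset.range (N + 1),
          (∑ A ∈ Finset.powersetCard m Finset.univ, ∏ j ∈ A, a j) * s ^ m := by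
  have h := Finset.prod_add (fun j : Fin N => a j * s) (fun _ => (1 : ℝ)) Finset.univ
  simp only [Finset.prod_const_one, mul_one] at h
  calc ∏ j, (1 + a j * s) = ∏ j, (a j * s + 1) := by simp [add_comm]
    _ = ∑ t ∈ (Finset.univ : Finset (Fin N)).powerset, ∏ j ∈ t, (a j * s) := h
    _ = ∑ m ∈ Finset.range (N + 1), ∑ t ∈ Finset.powersetCard m Finset.univ,
          ∏ j ∈ t, (a j * s) := by
        rw [Finset.sum_powerset]
        simp
    _ = ∑ m ∈ Finset.range (N + 1),
          (∑ A ∈ Finset.powersetCard m Finset.univ, ∏ j ∈ A, a j) * s ^ m := by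
        refine Finset.sum_congr rfl fun m hm => ?_
        rw [Finset.sum_mul]
        refine Finset.sum_congr rfl fun t ht => ?_
        rw [Finset.prod_mul_distrib, Finset.prod_const,
          (Finset.mem_powersetCard.mp ht).2]

lemma exists_perm_image {N : ℕ} {A B : Finset (Fin N)} (h : A.card = B.card) :
    ∃ σ : Equiv.Perm (Fin N), A.image σ = B := by
  classical
  have hc : ∀ S : Finset (Fin N), Fintype.card {j : Fin N // ¬ j ∈ S} = N - S.card := by
    intro S
    rw [Fintype.card_subtype_compl]
    simp
  let e1 : {j : Fin N // j ∈ A} ≃ {j : Fin N // j ∈ B} := Finset.equivOfCardEq h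
  let e2 : {j : Fin N // ¬ j ∈ A} ≃ {j : Fin N // ¬ j ∈ B} :=
    Fintype.equivOfCardEq (by rw [hc, hc, h])
  let σ : Equiv.Perm (Fin N) :=
    (Equiv.sumCompl (· ∈ A)).symm.trans ((e1.sumCongr e2).trans (Equiv.sumCompl (· ∈ B)))
  refine ⟨σ, Finset.eq_of_subset_of_card_le ?_ ?_⟩
  · intro k hk
    simp only [Finset.mem_image] at hk
    obtain ⟨j, hj, rfl⟩ := hk
    have hσj : σ j = (e1 ⟨j, hj⟩ : Fin N) := by
      simp [σ, Equiv.sumCompl_symm_apply_of_pos (p := (· ∈ A)) hj]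
    rw [hσj]
    exact (e1 ⟨j, hj⟩).2
  · rw [Finset.card_image_of_injective _ σ.injective, h]

lemma fiber_const {N : ℕ} (A B C : Finset (Fin N)) (hB : B.card = A.card)
    (hC : C.card = A.card) :
    ((Finset.univ : Finset (Equiv.Perm (Fin N))).filter fun σ : Equiv.Perm (Fin N) => A.image ⇑σ = B).card
      = ((Finset.univ : Finset (Equiv.Perm (Fin N))).filter fun σ : Equiv.Perm (Fin N) => A.image ⇑σ = C).card := by
  classical
  obtain ⟨τ, hτ⟩ := exists_perm_image (hB.trans hC.symm)
  apply Finset.card_bij (fun σ _ => τ * σ)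
  · intro σ hσ
    simp only [Finset.mem_filter, Finset.mem_univ, true_and] at hσ ⊢
    rw [show ⇑(τ * σ) = ⇑τ ∘ ⇑σ from rfl, ← Finset.image_image, hσ, hτ]
  · intro σ1 h1 σ2 h2 h
    exact mul_left_cancel h
  · intro σ' hσ'
    refine ⟨τ⁻¹ * σ', ?_, ?_⟩
    · simp only [Finset.mem_filter, Finset.mem_univ, true_and] at hσ' ⊢
      rw [show ⇑(τ⁻¹ * σ') = ⇑τ⁻¹ ∘ ⇑σ' from rfl, ← Finset.image_image, hσ', ← hτ,
        Finset.image_image]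
      have hid : ⇑τ⁻¹ ∘ ⇑τ = id := by
        funext k
        simp
      rw [hid, Finset.image_id]
    · simp [mul_assoc]

lemma esymm_val (N : ℕ) (p : ℝ) (hp : 0 < p)
    (Q : ℕ → ℕ → ℝ)
    (hQ : ∀ x ≤ N, ∀ s : ℝ,
      ∑ m ∈ Finset.range (N + 1), (N.choose m : ℝ) * Q m x * s ^ m
        = (1 - ((1 - p) / p) * s) ^ x * (1 + s) ^ (N - x))
    (x : Fin N → Bool) (wx : ℕ)
    (hwx : wx = (Finset.univ.filter (fun j => x j = true)).card)
    (n : ℕ) (hn : n ≤ N) :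
    ∑ A ∈ Finset.powersetCard n (Finset.univ : Finset (Fin N)),
      ∏ j ∈ A, (1 - (if x j then (1 : ℝ) else 0) / p)
      = (N.choose n : ℝ) * Q n wx := by
  classical
  set a : Fin N → ℝ := fun j => 1 - (if x j then (1 : ℝ) else 0) / p with ha
  have hwxle : wx ≤ N := by
    rw [hwx]
    calc (Finset.univ.filter (fun j => x j = true)).card
        ≤ (Finset.univ : Finset (Fin N)).card := Finset.card_filter_le _ _
      _ = N := by simp
  have hgen : ∀ s : ℝ, ∏ j, (1 + a j * s)
      = (1 - ((1 - p) / p) * s) ^ wx * (1 + s) ^ (N - wx) := by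
    intro s
    rw [← Finset.prod_filter_mul_prod_filter_not Finset.univ (fun j => x j = true)]
    have h1 : ∀ j ∈ Finset.univ.filter (fun j => x j = true),
        1 + a j * s = 1 - ((1 - p) / p) * s := by
      intro j hj
      simp only [Finset.mem_filter] at hj
      simp only [ha, hj.2, if_true]
      field_simp
      ring
    have h2 : ∀ j ∈ Finset.univ.filter (fun j => ¬ x j = true),
        1 + a j * s = 1 + s := by
      intro j hj
      simp only [Finset.mem_filter] at hj
      simp [ha, hj.2]
    rw [Finset.prod_congr rfl h1, Finset.prod_congr rfl h2, Finset.prod_const,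
      Finset.prod_const, ← hwx]
    have hcard : (Finset.univ.filter (fun j => ¬ x j = true)).card = N - wx := by
      rw [hwx, Finset.filter_not, Finset.card_sdiff_of_subset (Finset.filter_subset _ _)]
      simp
    rw [hcard]
  have hkey : ∀ s : ℝ,
      ∑ m ∈ Finset.range (N + 1), ((N.choose m : ℝ) * Q m wx) * s ^ m
        = ∑ m ∈ Finset.range (N + 1),
            (∑ A ∈ Finset.powersetCard m Finset.univ, ∏ j ∈ A, a j) * s ^ m := by
    intro s
    rw [hQ wx hwxle s, ← hgen s, esymm_gen]
  have := coeff_ext_aux (N + 1) (fun m => (N.choose m : ℝ) * Q m wx)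
    (fun m => ∑ A ∈ Finset.powersetCard m Finset.univ, ∏ j ∈ A, a j)
    hkey (k := n) (by omega)
  exact this.symm
theorem stmt_9 (N : ℕ) (p : ℝ) (hp : 0 < p) (hp1 : p < 1)
    (Q : ℕ → ℕ → ℝ)
    (hQ : ∀ x ≤ N, ∀ s : ℝ,
      ∑ n ∈ Finset.range (N + 1), (N.choose n : ℝ) * Q n x * s ^ n
        = (1 - ((1 - p) / p) * s) ^ x * (1 + s) ^ (N - x))
    (x y : Fin N → Bool) (wx wy : ℕ)
    (hwx : wx = (Finset.univ.filter (fun j => x j = true)).card)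
    (hwy : wy = (Finset.univ.filter (fun j => y j = true)).card)
    (n : ℕ) (hn : n ≤ N) :
    (1 / (N.factorial : ℝ)) *
        ∑ σ : Equiv.Perm (Fin N),
          ∑ A ∈ Finset.powersetCard n (Finset.univ : Finset (Fin N)),
            ∏ j ∈ A,
              ((1 - (if x j then (1 : ℝ) else 0) / p) *
                (1 - (if y (σ j) then (1 : ℝ) else 0) / p))
      = (N.choose n : ℝ) * Q n wx * Q n wy := by
  classical
  let a : Fin N → ℝ := fun j => 1 - (if x j then (1 : ℝ) else 0) / p
  let b : Fin N → ℝ := fun j => 1 - (if y j then (1 : ℝ) else 0) / p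
  have hEa : ∑ A ∈ Finset.powersetCard n (Finset.univ : Finset (Fin N)),
      ∏ j ∈ A, a j = (N.choose n : ℝ) * Q n wx := esymm_val N p hp Q hQ x wx hwx n hn
  have hEb : ∑ A ∈ Finset.powersetCard n (Finset.univ : Finset (Fin N)),
      ∏ j ∈ A, b j = (N.choose n : ℝ) * Q n wy := esymm_val N p hp Q hQ y wy hwy n hn
  have hchoose0 : (0 : ℝ) < (N.choose n : ℝ) := by
    exact_mod_cast Nat.choose_pos hn
  have hfact0 : (0 : ℝ) < (N.factorial : ℝ) := by exact_mod_cast N.factorial_pos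
  have hcard_ps : (Finset.powersetCard n (Finset.univ : Finset (Fin N))).card
      = N.choose n := by
    rw [Finset.card_powersetCard]
    simp
  -- inner permutation sum
  have hinner : ∀ A ∈ Finset.powersetCard n (Finset.univ : Finset (Fin N)),
      ∑ σ : Equiv.Perm (Fin N), ∏ j ∈ A, b (σ j)
        = ((N.factorial : ℝ) / (N.choose n : ℝ)) *
            ∑ B ∈ Finset.powersetCard n (Finset.univ : Finset (Fin N)), ∏ k ∈ B, b k := by
    intro A hA
    have hAcard : A.card = n := (Finset.mem_powersetCard.mp hA).2
    have himg : (Finset.univ : Finset (Equiv.Perm (Fin N))).image (fun σ : Equiv.Perm (Fin N) => A.image ⇑σ)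
        = Finset.powersetCard n (Finset.univ : Finset (Fin N)) := by
      apply Finset.Subset.antisymm
      · intro B hB
        simp only [Finset.mem_image] at hB
        obtain ⟨σ, -, rfl⟩ := hB
        rw [Finset.mem_powersetCard]
        exact ⟨Finset.subset_univ _, by rw [Finset.card_image_of_injective _ σ.injective, hAcard]⟩
      · intro B hB
        have hBcard := (Finset.mem_powersetCard.mp hB).2
        obtain ⟨σ, hσ⟩ := exists_perm_image (hAcard.trans hBcard.symm)
        exact Finset.mem_image.mpr ⟨σ, Finset.mem_univ σ, hσ⟩
    set c : ℕ := ((Finset.univ : Finset (Equiv.Perm (Fin N))).filter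
      fun σ : Equiv.Perm (Fin N) => A.image ⇑σ = A).card with hcdef
    have hfc : ∀ B ∈ Finset.powersetCard n (Finset.univ : Finset (Fin N)),
        ((Finset.univ : Finset (Equiv.Perm (Fin N))).filter
          fun σ : Equiv.Perm (Fin N) => A.image ⇑σ = B).card = c :=
      fun B hB => fiber_const A B A ((Finset.mem_powersetCard.mp hB).2.trans hAcard.symm)
        (hAcard.trans hAcard.symm)
    have htot : N.factorial = N.choose n * c := by
      have h1 := Finset.card_eq_sum_card_fiberwise
        (f := fun σ : Equiv.Perm (Fin N) => A.image ⇑σ)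
        (s := (Finset.univ : Finset (Equiv.Perm (Fin N))))
        (t := Finset.powersetCard n (Finset.univ : Finset (Fin N)))
        (fun σ _ => by rw [← himg]; exact Finset.mem_image_of_mem _ (Finset.mem_univ σ))
      have h0 : (Finset.univ : Finset (Equiv.Perm (Fin N))).card = N.factorial := by
        rw [Finset.card_univ, Fintype.card_perm, Fintype.card_fin]
      rw [h0, Finset.sum_congr rfl hfc, Finset.sum_const, smul_eq_mul, hcard_ps] at h1
      exact h1
    have hcval : (c : ℝ) = (N.factorial : ℝ) / (N.choose n : ℝ) := by
      have h2 : (N.factorial : ℝ) = (N.choose n : ℝ) * (c : ℝ) := by exact_mod_cast htot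
      rw [h2, mul_comm, mul_div_assoc, div_self hchoose0.ne', mul_one]
    calc ∑ σ : Equiv.Perm (Fin N), ∏ j ∈ A, b (σ j)
        = ∑ σ : Equiv.Perm (Fin N), ∏ k ∈ A.image ⇑σ, b k :=
          Finset.sum_congr rfl fun σ _ =>
            (Finset.prod_image (fun i _ j _ h => σ.injective h)).symm
      _ = ∑ B ∈ (Finset.univ : Finset (Equiv.Perm (Fin N))).image (fun σ : Equiv.Perm (Fin N) => A.image ⇑σ),
            (((Finset.univ : Finset (Equiv.Perm (Fin N))).filter
              fun σ : Equiv.Perm (Fin N) => A.image ⇑σ = B).card) • ∏ k ∈ B, b k :=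
          Finset.sum_comp (fun B => ∏ k ∈ B, b k) (fun σ : Equiv.Perm (Fin N) => A.image ⇑σ)
      _ = ∑ B ∈ Finset.powersetCard n (Finset.univ : Finset (Fin N)),
            (c : ℝ) * ∏ k ∈ B, b k := by
          rw [himg]
          refine Finset.sum_congr rfl fun B hB => ?_
          rw [hfc B hB, nsmul_eq_mul]
      _ = ((N.factorial : ℝ) / (N.choose n : ℝ)) *
            ∑ B ∈ Finset.powersetCard n (Finset.univ : Finset (Fin N)), ∏ k ∈ B, b k := by
          rw [← Finset.mul_sum, hcval]
  -- assemble
  have hswap : ∑ σ : Equiv.Perm (Fin N),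
      ∑ A ∈ Finset.powersetCard n (Finset.univ : Finset (Fin N)),
        ∏ j ∈ A, (a j * b (σ j))
      = ∑ A ∈ Finset.powersetCard n (Finset.univ : Finset (Fin N)),
          (∏ j ∈ A, a j) * ∑ σ : Equiv.Perm (Fin N), ∏ j ∈ A, b (σ j) := by
    rw [Finset.sum_comm]
    exact Finset.sum_congr rfl fun A _ => by
      rw [Finset.mul_sum]
      exact Finset.sum_congr rfl fun σ _ => Finset.prod_mul_distrib
  have hmain : ∑ σ : Equiv.Perm (Fin N),
      ∑ A ∈ Finset.powersetCard n (Finset.univ : Finset (Fin N)),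
        ∏ j ∈ A, (a j * b (σ j))
      = (((N.choose n : ℝ) * Q n wx)) *
          (((N.factorial : ℝ) / (N.choose n : ℝ)) * ((N.choose n : ℝ) * Q n wy)) := by
    rw [hswap]
    calc ∑ A ∈ Finset.powersetCard n (Finset.univ : Finset (Fin N)),
          (∏ j ∈ A, a j) * ∑ σ : Equiv.Perm (Fin N), ∏ j ∈ A, b (σ j)
        = ∑ A ∈ Finset.powersetCard n (Finset.univ : Finset (Fin N)),
            (∏ j ∈ A, a j) * (((N.factorial : ℝ) / (N.choose n : ℝ)) *
              ∑ B ∈ Finset.powersetCard n (Finset.univ : Finset (Fin N)), ∏ k ∈ B, b k) :=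
          Finset.sum_congr rfl fun A hA => by rw [hinner A hA]
      _ = (∑ A ∈ Finset.powersetCard n (Finset.univ : Finset (Fin N)), ∏ j ∈ A, a j) *
            (((N.factorial : ℝ) / (N.choose n : ℝ)) *
              ∑ B ∈ Finset.powersetCard n (Finset.univ : Finset (Fin N)), ∏ k ∈ B, b k) := by
          rw [← Finset.sum_mul]
      _ = (((N.choose n : ℝ) * Q n wx)) *
            (((N.factorial : ℝ) / (N.choose n : ℝ)) * ((N.choose n : ℝ) * Q n wy)) := by
          rw [hEa, hEb]
  show (1 / (N.factorial : ℝ)) *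
      (∑ σ : Equiv.Perm (Fin N),
        ∑ A ∈ Finset.powersetCard n (Finset.univ : Finset (Fin N)),
          ∏ j ∈ A, (a j * b (σ j)))
    = (N.choose n : ℝ) * Q n wx * Q n wy
  rw [hmain]
  field_simp
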